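/- Let (X,μ) be a probability space and h : X → ℝ a measurable function with ∫ h dμ = 0 and h ≥ −1, and set H = ∫ h₊ dμ = ∫ h₋ dμ (positive and negative parts). Then ∫ (1+h) log(1+h) dμ ≥ (1+H)log(1+H) + (1−H)log(1−H) ≥ H². -/

import Mathlib

open MeasureTheory Real

lemma mylog_convex : ConvexOn ℝ (Set.Ici (-1:ℝ)) (fun x => (1 + x) * Real.log (1 + x)) := by
  constructor
  · exact convex_Ici _
  · intro x hx y hy a b ha hb hab
    simp only [Set.mem_Ici] at hx hy
    have hx' : (1:ℝ) + x ∈ Set.Ici (0:ℝ) := by simp; linarith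
    have hy' : (1:ℝ) + y ∈ Set.Ici (0:ℝ) := by simp; linarith
    have key := Real.convexOn_mul_log.2 hx' hy' ha hb hab
    have e : a • ((1:ℝ)+x) + b • (1+y) = 1 + (a • x + b • y) := by
      simp only [smul_eq_mul]; nlinarith
    rw [e] at key
    simpa [smul_eq_mul, mul_comm, mul_left_comm, mul_add] using key

lemma mylog_cont : Continuous (fun x : ℝ => (1 + x) * Real.log (1 + x)) :=
  Real.continuous_mul_log.comp (continuous_const.add continuous_id)

lemma jensen_one {X : Type*} [MeasurableSpace X] (μ : Measure X) [IsProbabilityMeasure μ]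
    (g : X → ℝ) (hg : Integrable g μ) (hgs : ∀ x, -1 ≤ g x)
    (hfi : Integrable (fun x => (1 + g x) * Real.log (1 + g x)) μ) :
    (1 + ∫ x, g x ∂μ) * Real.log (1 + ∫ x, g x ∂μ) ≤
      ∫ x, (1 + g x) * Real.log (1 + g x) ∂μ :=
  mylog_convex.map_integral_le mylog_cont.continuousOn isClosed_Ici
    (ae_of_all _ hgs) hg hfi

lemma log_ratio_ge (t : ℝ) (h0 : 0 ≤ t) (h1 : t < 1) :
    2 * t ≤ Real.log (1 + t) - Real.log (1 - t) := by
  set ψ : ℝ → ℝ := fun t => Real.log (1 + t) - Real.log (1 - t) - 2 * t with hψ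
  have hderiv : ∀ x ∈ Set.Ioo (0:ℝ) 1,
      HasDerivAt ψ (1/(1+x) - (-1/(1-x)) - 2) x := by
    intro x hx
    have h1x : (0:ℝ) < 1 + x := by linarith [hx.1]
    have h2x : (0:ℝ) < 1 - x := by linarith [hx.2]
    have d1 : HasDerivAt (fun t : ℝ => Real.log (1+t)) (1/(1+x)) x := by
      have := (((hasDerivAt_id x).const_add 1).log h1x.ne')
      simpa using this
    have d2 : HasDerivAt (fun t : ℝ => Real.log (1-t)) (-1/(1-x)) x := by
      have : HasDerivAt (fun t : ℝ => 1 - t) (-1) x := by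
        simpa using ((hasDerivAt_id x).const_sub 1)
      have := this.log h2x.ne'
      simpa [div_eq_mul_inv] using this
    have d3 : HasDerivAt (fun t : ℝ => 2 * t) 2 x := by
      simpa using (hasDerivAt_id x).const_mul 2
    exact (d1.sub d2).sub d3
  have key : MonotoneOn ψ (Set.Ico (0:ℝ) 1) := by
    apply monotoneOn_of_deriv_nonneg (convex_Ico 0 1)
    · apply ContinuousOn.sub
      apply ContinuousOn.sub
      · apply ContinuousOn.log
        · fun_prop
        · intro x hx; simp only [Set.mem_Ico] at hx
          have : (0:ℝ) < 1 + x := by linarith [hx.1]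
          exact this.ne'
      · apply ContinuousOn.log
        · fun_prop
        · intro x hx; simp only [Set.mem_Ico] at hx
          have : (0:ℝ) < 1 - x := by linarith [hx.2]
          exact this.ne'
      · fun_prop
    · rw [interior_Ico]
      intro x hx
      exact (hderiv x hx).differentiableAt.differentiableWithinAt
    · rw [interior_Ico]
      intro x hx
      rw [(hderiv x hx).deriv]
      have h1x : (0:ℝ) < 1 + x := by linarith [hx.1]
      have h2x : (0:ℝ) < 1 - x := by linarith [hx.2]
      rw [div_sub_div _ _ h1x.ne' h2x.ne', sub_nonneg, le_div_iff₀ (by positivity)]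
      nlinarith [hx.1, hx.2]
  have h00 : (0:ℝ) ∈ Set.Ico (0:ℝ) 1 := by constructor <;> norm_num
  have ht : t ∈ Set.Ico (0:ℝ) 1 := ⟨h0, h1⟩
  have := key h00 ht h0
  simp only [hψ] at this
  norm_num at this
  linarith

lemma quad_le (t : ℝ) (h0 : 0 ≤ t) (h1 : t ≤ 1) :
    t^2 ≤ (1+t)*Real.log (1+t) + (1-t)*Real.log (1-t) := by
  rcases eq_or_lt_of_le h1 with rfl | hlt
  · norm_num
    have := Real.log_two_gt_d9
    nlinarith
  set g : ℝ → ℝ := fun t => (1+t)*Real.log (1+t) + (1-t)*Real.log (1-t) - t^2 with hg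
  have hderiv : ∀ x ∈ Set.Ioo (0:ℝ) 1,
      HasDerivAt g (Real.log (1+x) - Real.log (1-x) - 2*x) x := by
    intro x hx
    have h1x : (0:ℝ) < 1 + x := by linarith [hx.1]
    have h2x : (0:ℝ) < 1 - x := by linarith [hx.2]
    have a1 : HasDerivAt (fun t : ℝ => 1 + t) 1 x := by
      simpa using (hasDerivAt_id x).const_add 1
    have a2 : HasDerivAt (fun t : ℝ => 1 - t) (-1) x := by
      simpa using (hasDerivAt_id x).const_sub 1
    have d1 : HasDerivAt (fun t : ℝ => (1+t)*Real.log (1+t))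
        (Real.log (1+x) + 1) x := by
      have := a1.mul (a1.log h1x.ne')
      have e : 1 * Real.log (1+x) + (1+x) * (1 / (1+x)) = Real.log (1+x) + 1 := by
        field_simp
      rwa [e] at this
    have d2 : HasDerivAt (fun t : ℝ => (1-t)*Real.log (1-t))
        (-Real.log (1-x) - 1) x := by
      have := a2.mul (a2.log h2x.ne')
      have e : -1 * Real.log (1-x) + (1-x) * (-1 / (1-x)) = -Real.log (1-x) - 1 := by
        field_simp
        ring
      rwa [e] at this
    have d3 : HasDerivAt (fun t : ℝ => t^2) (2*x) x := by
      simpa using hasDerivAt_pow 2 x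
    have := (d1.add d2).sub d3
    exact this.congr_deriv (by ring)
  have key : MonotoneOn g (Set.Ico (0:ℝ) 1) := by
    apply monotoneOn_of_deriv_nonneg (convex_Ico 0 1)
    · apply Continuous.continuousOn
      have c2 : Continuous (fun t : ℝ => (1-t)*Real.log (1-t)) :=
        Real.continuous_mul_log.comp (continuous_const.sub continuous_id)
      exact (mylog_cont.add c2).sub (continuous_pow 2)
    · rw [interior_Ico]
      intro x hx
      exact (hderiv x hx).differentiableAt.differentiableWithinAt
    · rw [interior_Ico]
      intro x hx
      rw [(hderiv x hx).deriv]
      have := log_ratio_ge x hx.1.le hx.2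
      linarith
  have h00 : (0:ℝ) ∈ Set.Ico (0:ℝ) 1 := by constructor <;> norm_num
  have := key h00 ⟨h0, hlt⟩ h0
  simp only [hg] at this
  norm_num at this
  linarith

lemma abs_mul_log_le_one {u : ℝ} (h0 : 0 ≤ u) (h1 : u ≤ 1) :
    |u * Real.log u| ≤ 1 := by
  rcases eq_or_lt_of_le h0 with rfl | hu
  · simp
  have hlog : Real.log u ≤ 0 := Real.log_nonpos h0 h1
  have hinv : Real.log u⁻¹ ≤ u⁻¹ - 1 :=
    Real.log_le_sub_one_of_pos (by positivity)
  rw [Real.log_inv] at hinv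
  have : -(u * Real.log u) ≤ 1 - u := by
    have := mul_le_mul_of_nonneg_left hinv h0
    rw [mul_sub] at this
    rw [mul_inv_cancel₀ hu.ne'] at this
    linarith
  rw [abs_of_nonpos (mul_nonpos_of_nonneg_of_nonpos h0 hlog)]
  linarith

/-- Jensen-type entropy bound: on a probability space, if `h` is integrable with
`∫ h = 0` and `h ≥ −1`, and `H = ∫ h₊ = ∫ h₋`, then
`∫ (1+h) log(1+h) ≥ (1+H)log(1+H) + (1−H)log(1−H) ≥ H²`. -/
theorem entropy_jensen_lower_bound {X : Type*} [MeasurableSpace X]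
    (μ : Measure X) [IsProbabilityMeasure μ]
    (h : X → ℝ) (hmeas : Measurable h) (hint : Integrable h μ)
    (hint2 : Integrable (fun x => (1 + h x) * Real.log (1 + h x)) μ)
    (hzero : ∫ x, h x ∂μ = 0) (hge : ∀ x, -1 ≤ h x)
    (H : ℝ) (hHp : H = ∫ x, max (h x) 0 ∂μ) (hHm : H = ∫ x, max (-h x) 0 ∂μ) :
    (1 + H) * Real.log (1 + H) + (1 - H) * Real.log (1 - H) ≤
        ∫ x, (1 + h x) * Real.log (1 + h x) ∂μ ∧
    H ^ 2 ≤ (1 + H) * Real.log (1 + H) + (1 - H) * Real.log (1 - H) := by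
  set f : ℝ → ℝ := fun x => (1 + x) * Real.log (1 + x) with hf
  -- basic facts about H
  have hmaxint : Integrable (fun x => max (h x) 0) μ := hint.pos_part
  have hmaxnegint : Integrable (fun x => max (-h x) 0) μ := hint.neg.pos_part
  have hH0 : 0 ≤ H := by
    rw [hHp]; exact integral_nonneg (fun x => le_max_right _ _)
  have hH1 : H ≤ 1 := by
    rw [hHm]
    calc ∫ x, max (-h x) 0 ∂μ ≤ ∫ _x, (1:ℝ) ∂μ := by
          apply integral_mono hmaxnegint (integrable_const 1)
          intro x
          have := hge x
          simp only [max_le_iff]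
          constructor <;> linarith [zero_le_one (α := ℝ)]
      _ = 1 := by simp
  -- min decomposition
  have hminmax : ∀ x, min (h x) 0 = -(max (-h x) 0) := by
    intro x
    rcases le_or_gt (h x) 0 with hx | hx
    · rw [min_eq_left hx, max_eq_left (by linarith)]; ring
    · rw [min_eq_right hx.le, max_eq_right (by linarith)]; ring
  have hminint : Integrable (fun x => min (h x) 0) μ := by
    rw [show (fun x => min (h x) 0) = fun x => -(max (-h x) 0) from funext hminmax]
    exact hmaxnegint.neg
  have hIntMin : ∫ x, min (h x) 0 ∂μ = -H := by
    rw [show (fun x => min (h x) 0) = (fun x => -(max (-h x) 0)) from funext hminmax]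
    rw [integral_neg, ← hHm]
  have hIntMax : ∫ x, max (h x) 0 ∂μ = H := hHp.symm
  -- pointwise decomposition of f ∘ h
  have hsplit : ∀ x, f (h x) = f (max (h x) 0) + f (min (h x) 0) := by
    intro x
    rcases le_or_gt 0 (h x) with hx | hx
    · rw [max_eq_left hx, min_eq_right hx]
      simp [hf]
    · rw [max_eq_right hx.le, min_eq_left hx.le]
      simp [hf]
  -- integrability of the pieces
  have hfBmeas : Measurable (fun x => f (min (h x) 0)) := by
    apply (Real.continuous_mul_log.comp (continuous_const.add continuous_id)).measurable.comp
    exact hmeas.min measurable_const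
  have hfBint : Integrable (fun x => f (min (h x) 0)) μ := by
    apply Integrable.mono' (integrable_const (1:ℝ)) hfBmeas.aestronglyMeasurable
    apply ae_of_all
    intro x
    have h1 : -1 ≤ min (h x) 0 := le_min (hge x) (by norm_num)
    have h2 : min (h x) 0 ≤ 0 := min_le_right _ _
    have := abs_mul_log_le_one (u := 1 + min (h x) 0) (by linarith) (by linarith)
    show ‖(1 + min (h x) 0) * Real.log (1 + min (h x) 0)‖ ≤ 1
    rw [Real.norm_eq_abs]
    exact this
  have hfAint : Integrable (fun x => f (max (h x) 0)) μ := by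
    have : (fun x => f (max (h x) 0)) = fun x => f (h x) - f (min (h x) 0) := by
      funext x; rw [hsplit x]; ring
    rw [this]
    exact hint2.sub hfBint
  -- Jensen applications
  have jA := jensen_one μ (fun x => max (h x) 0) hmaxint
    (fun x => by simp only [le_max_iff]; right; norm_num) hfAint
  have jB := jensen_one μ (fun x => min (h x) 0) hminint
    (fun x => le_min (hge x) (by norm_num)) hfBint
  rw [hIntMax] at jA
  rw [hIntMin] at jB
  have hsum : ∫ x, f (h x) ∂μ =
      (∫ x, f (max (h x) 0) ∂μ) + ∫ x, f (min (h x) 0) ∂μ := by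
    rw [← integral_add hfAint hfBint]
    exact integral_congr_ae (ae_of_all _ hsplit)
  constructor
  · have : (1 + H) * Real.log (1 + H) + (1 + -H) * Real.log (1 + -H) ≤
        ∫ x, f (h x) ∂μ := by
      rw [hsum]; exact add_le_add jA jB
    rw [show (1:ℝ) + -H = 1 - H by ring] at this
    exact this
  · exact quad_le H hH0 hH1
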